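/- For ν > 0 and ω > 0, define q₁ = aνω(ν²(a²−b²)+ω²)/Δ, q₂ = bνω(ν²(b²−a²)+ω²)/Δ, q₃ = (ν⁴(a²−b²)² + ν²ω²(a²+b²))/Δ, q₄ = 2abν²ω²/Δ, where Δ = ν⁴(a²−b²)² + 2ν²ω²(a²+b²) + ω⁴. Then the pair α₋(t) = q₁cos ωt + q₂cos(ωt+φ) + q₃sin ωt + q₄sin(ωt+φ), α₊(t) = q₁cos(ωt+φ) + q₂cos ωt + q₃sin(ωt+φ) + q₄sin ωt solves α̇₋ = ν(a(α₋ − sin ωt)+b(α₊ − sin(ωt+φ))), α̇₊ = ν(b(α₋ − sin ωt)+a(α₊ − sin(ωt+φ))) for all t, provided Δ ≠ 0. -/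
import Mathlib


open Real

private lemma deriv_combo (ω φ q₁ q₂ q₃ q₄ t : ℝ) :
    HasDerivAt (fun t => q₁ * cos (ω * t) + q₂ * cos (ω * t + φ)
        + q₃ * sin (ω * t) + q₄ * sin (ω * t + φ))
      (q₁ * (-sin (ω * t) * ω) + q₂ * (-sin (ω * t + φ) * ω)
        + q₃ * (cos (ω * t) * ω) + q₄ * (cos (ω * t + φ) * ω)) t := by
  have hωt : HasDerivAt (fun t : ℝ => ω * t) ω t := by
    simpa using (hasDerivAt_id t).const_mul ω
  have hωtφ : HasDerivAt (fun t : ℝ => ω * t + φ) ω t := hωt.add_const φ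
  exact (((((hωt.cos).const_mul q₁).add ((hωtφ.cos).const_mul q₂)).add
    ((hωt.sin).const_mul q₃)).add ((hωtφ.sin).const_mul q₄))

/-- the explicit harmonic pair solves the forced linear shape system. -/
theorem stmt3 (ν ω a b φ : ℝ) (hν : 0 < ν) (hω : 0 < ω)
    (Δ : ℝ) (hΔdef : Δ = ν^4 * (a^2 - b^2)^2 + 2 * ν^2 * ω^2 * (a^2 + b^2) + ω^4)
    (hΔ : Δ ≠ 0)
    (q₁ q₂ q₃ q₄ : ℝ)
    (hq₁ : q₁ = a * ν * ω * (ν^2 * (a^2 - b^2) + ω^2) / Δ)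
    (hq₂ : q₂ = b * ν * ω * (ν^2 * (b^2 - a^2) + ω^2) / Δ)
    (hq₃ : q₃ = (ν^4 * (a^2 - b^2)^2 + ν^2 * ω^2 * (a^2 + b^2)) / Δ)
    (hq₄ : q₄ = 2 * a * b * ν^2 * ω^2 / Δ)
    (αm αp : ℝ → ℝ)
    (hαm : αm = fun t => q₁ * cos (ω * t) + q₂ * cos (ω * t + φ)
        + q₃ * sin (ω * t) + q₄ * sin (ω * t + φ))
    (hαp : αp = fun t => q₁ * cos (ω * t + φ) + q₂ * cos (ω * t)
        + q₃ * sin (ω * t + φ) + q₄ * sin (ω * t)) :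
    ∀ t, HasDerivAt αm
        (ν * (a * (αm t - sin (ω * t)) + b * (αp t - sin (ω * t + φ)))) t ∧
      HasDerivAt αp
        (ν * (b * (αm t - sin (ω * t)) + a * (αp t - sin (ω * t + φ)))) t := by
  intro t
  have hm := deriv_combo ω φ q₁ q₂ q₃ q₄ t
  have hp := deriv_combo ω φ q₂ q₁ q₄ q₃ t
  have hp' : HasDerivAt (fun t => q₁ * cos (ω * t + φ) + q₂ * cos (ω * t)
        + q₃ * sin (ω * t + φ) + q₄ * sin (ω * t))
      (q₂ * (-sin (ω * t) * ω) + q₁ * (-sin (ω * t + φ) * ω)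
        + q₄ * (cos (ω * t) * ω) + q₃ * (cos (ω * t + φ) * ω)) t := by
    convert hp using 2 <;> ring
  constructor
  · rw [hαm]
    convert hm using 1
    simp only [hαm, hαp]
    rw [hq₁, hq₂, hq₃, hq₄, hΔdef] at *
    field_simp
    ring
  · rw [hαp]
    convert hp' using 1
    simp only [hαm, hαp]
    rw [hq₁, hq₂, hq₃, hq₄, hΔdef] at *
    field_simp
    ring
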